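/- Let $(\varphi,\psi)$ and $(\varphi_1,\psi_1)$ be two monotone solutions of the semi-wave problem: $d_1\varphi''-c\varphi'-a\varphi+H(\psi)=0$, $d_2\psi''-c\psi'-b\psi+G(\varphi)=0$ on $(0,\infty)$, with $\varphi(0)=\psi(0)=0$, $(\varphi,\psi)(\infty)=(u^*,v^*)$, $\varphi',\psi'>0$, and the same for $(\varphi_1,\psi_1)$. Assume (H) holds with $au^*=H(v^*)$, $bv^*=G(u^*)$ and $H$ strictly concave. If $\rho^*:=\inf\{\rho\ge 1:\rho\varphi\ge\varphi_1\text{ and }\rho\psi\ge\psi_1\text{ on }(0,\infty)\}$ satisfies $\rho^*>1$, then $-d_1(\rho^*\varphi-\varphi_1)''+c(\rho^*\varphi-\varphi_1)'+a(\rho^*\varphi-\varphi_1)>0$ on $(0,\infty)$. -/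

import Mathlib

/-- If `ρ* > 1` is the infimum of the scalings `ρ ≥ 1` with
`(ρφ, ρψ) ≥ (φ₁, ψ₁)` for two monotone semi-waves, then
`-d₁(ρ*φ - φ₁)'' + c(ρ*φ - φ₁)' + a(ρ*φ - φ₁) > 0` on `(0, ∞)`. -/
theorem stmt13 (a b c d1 d2 ustar vstar : ℝ) (ha : 0 < a) (hb : 0 < b)
    (hc : 0 ≤ c) (hd1 : 0 < d1) (hd2 : 0 < d2)
    (hu : 0 < ustar) (hv : 0 < vstar)
    (H G : ℝ → ℝ)
    (hHcont : ContinuousOn H (Set.Ici 0)) (hGcont : ContinuousOn G (Set.Ici 0))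
    (hH0 : H 0 = 0) (hG0 : G 0 = 0)
    (hHmono : MonotoneOn H (Set.Ici 0)) (hGmono : MonotoneOn G (Set.Ici 0))
    (hHconc : StrictConcaveOn ℝ (Set.Ici 0) H) (hGconc : StrictConcaveOn ℝ (Set.Ici 0) G)
    (heq1 : a * ustar = H vstar) (heq2 : b * vstar = G ustar)
    (φ ψ φ1 ψ1 : ℝ → ℝ)
    (hreg : ContDiffOn ℝ 2 φ (Set.Ici 0) ∧ ContDiffOn ℝ 2 ψ (Set.Ici 0) ∧
      ContDiffOn ℝ 2 φ1 (Set.Ici 0) ∧ ContDiffOn ℝ 2 ψ1 (Set.Ici 0))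
    (hode : ∀ x : ℝ, 0 < x →
      d1 * deriv (deriv φ) x - c * deriv φ x - a * φ x + H (ψ x) = 0 ∧
      d2 * deriv (deriv ψ) x - c * deriv ψ x - b * ψ x + G (φ x) = 0)
    (hode1 : ∀ x : ℝ, 0 < x →
      d1 * deriv (deriv φ1) x - c * deriv φ1 x - a * φ1 x + H (ψ1 x) = 0 ∧
      d2 * deriv (deriv ψ1) x - c * deriv ψ1 x - b * ψ1 x + G (φ1 x) = 0)
    (hbc : φ 0 = 0 ∧ ψ 0 = 0 ∧ φ1 0 = 0 ∧ ψ1 0 = 0)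
    (hlim : Filter.Tendsto φ Filter.atTop (nhds ustar) ∧
      Filter.Tendsto ψ Filter.atTop (nhds vstar) ∧
      Filter.Tendsto φ1 Filter.atTop (nhds ustar) ∧
      Filter.Tendsto ψ1 Filter.atTop (nhds vstar))
    (hmono : (∀ x : ℝ, 0 ≤ x → 0 < deriv φ x ∧ 0 < deriv ψ x) ∧
      (∀ x : ℝ, 0 ≤ x → 0 < deriv φ1 x ∧ 0 < deriv ψ1 x))
    (ρstar : ℝ)
    (hρstar : ρstar = sInf {ρ : ℝ | 1 ≤ ρ ∧
      ∀ x : ℝ, 0 < x → φ1 x ≤ ρ * φ x ∧ ψ1 x ≤ ρ * ψ x})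
    (hρdom : ∀ x : ℝ, 0 < x → φ1 x ≤ ρstar * φ x ∧ ψ1 x ≤ ρstar * ψ x)
    (hρgt : 1 < ρstar) :
    ∀ x : ℝ, 0 < x →
      0 < -d1 * deriv (deriv (fun y => ρstar * φ y - φ1 y)) x
        + c * deriv (fun y => ρstar * φ y - φ1 y) x
        + a * (ρstar * φ x - φ1 x) := by
  intro x hx
  obtain ⟨hφ, hψ, hφ1, hψ1⟩ := hreg
  have hOpen : IsOpen (Set.Ioi (0:ℝ)) := isOpen_Ioi
  have hsub : Set.Ioi (0:ℝ) ⊆ Set.Ici 0 := Set.Ioi_subset_Ici_self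
  -- differentiability facts
  have key : ∀ f : ℝ → ℝ, ContDiffOn ℝ 2 f (Set.Ici 0) →
      (∀ y ∈ Set.Ioi (0:ℝ), DifferentiableAt ℝ f y) ∧
      DifferentiableAt ℝ (deriv f) x := by
    intro f hf
    have hf2 : ContDiffOn ℝ 2 f (Set.Ioi 0) := hf.mono hsub
    have hd1 : ∀ y ∈ Set.Ioi (0:ℝ), DifferentiableAt ℝ f y := by
      intro y hy
      have := (hf2.differentiableOn (by norm_num)) y hy
      exact this.differentiableAt (hOpen.mem_nhds hy)
    have hderiv : ContDiffOn ℝ 1 (deriv f) (Set.Ioi 0) :=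
      hf2.deriv_of_isOpen hOpen (by norm_num)
    have hd2 : DifferentiableAt ℝ (deriv f) x :=
      ((hderiv.differentiableOn (by norm_num)) x hx).differentiableAt (hOpen.mem_nhds hx)
    exact ⟨hd1, hd2⟩
  obtain ⟨hφd, hφd2⟩ := key φ hφ
  obtain ⟨hφ1d, hφ1d2⟩ := key φ1 hφ1
  -- first derivative of the combination on Ioi 0
  have hder : ∀ y ∈ Set.Ioi (0:ℝ),
      deriv (fun y => ρstar * φ y - φ1 y) y = ρstar * deriv φ y - deriv φ1 y := by
    intro y hy
    rw [deriv_fun_sub ((hφd y hy).const_mul _) (hφ1d y hy), deriv_const_mul _ (hφd y hy)]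
  have hderEq : deriv (fun y => ρstar * φ y - φ1 y) =ᶠ[nhds x]
      (fun y => ρstar * deriv φ y - deriv φ1 y) := by
    filter_upwards [hOpen.mem_nhds hx] with y hy using hder y hy
  have hder2 : deriv (deriv (fun y => ρstar * φ y - φ1 y)) x
      = ρstar * deriv (deriv φ) x - deriv (deriv φ1) x := by
    rw [hderEq.deriv_eq, deriv_fun_sub (hφd2.const_mul _) hφ1d2, deriv_const_mul _ hφd2]
  rw [hder2, hder x hx]
  -- use the ODEs
  have e1 := (hode x hx).1
  have e2 := (hode1 x hx).1
  have hexpr : -d1 * (ρstar * deriv (deriv φ) x - deriv (deriv φ1) x)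
      + c * (ρstar * deriv φ x - deriv φ1 x) + a * (ρstar * φ x - φ1 x)
      = ρstar * H (ψ x) - H (ψ1 x) := by nlinarith [e1, e2]
  rw [hexpr]
  -- positivity of ψ x and ψ1 x
  have hmonoOn : ∀ f : ℝ → ℝ, ContDiffOn ℝ 2 f (Set.Ici 0) →
      (∀ y : ℝ, 0 ≤ y → 0 < deriv f y) → f 0 = 0 → 0 < f x := by
    intro f hf hf' hf0
    have : StrictMonoOn f (Set.Ici 0) := by
      apply strictMonoOn_of_deriv_pos (convex_Ici 0) (hf.continuousOn)
      intro y hy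
      rw [interior_Ici] at hy
      exact hf' y (le_of_lt hy)
    have := this (Set.self_mem_Ici) (hsub (Set.mem_Ioi.2 hx)) hx
    rwa [hf0] at this
  have hψx : 0 < ψ x := hmonoOn ψ hψ (fun y hy => (hmono.1 y hy).2) hbc.2.1
  have hψ1x : 0 ≤ ψ1 x :=
    le_of_lt (hmonoOn ψ1 hψ1 (fun y hy => (hmono.2 y hy).2) hbc.2.2.2)
  have hρψ : ψ1 x ≤ ρstar * ψ x := (hρdom x hx).2
  have hρpos : (0:ℝ) < ρstar := lt_trans one_pos hρgt
  -- concavity: H (ρ t) < ρ H t for t > 0, ρ > 1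
  have hconc : H (ρstar * ψ x) < ρstar * H (ψ x) := by
    have h0 : (0:ℝ) ∈ Set.Ici (0:ℝ) := Set.self_mem_Ici
    have hρψpos : 0 < ρstar * ψ x := mul_pos hρpos hψx
    have hρψmem : ρstar * ψ x ∈ Set.Ici (0:ℝ) := le_of_lt hρψpos
    have hab : (1 - 1/ρstar) + 1/ρstar = 1 := by ring
    have ha' : 0 < 1 - 1/ρstar := by
      rw [sub_pos]; exact (div_lt_one hρpos).2 hρgt
    have hb' : 0 < 1/ρstar := by positivity
    have := hHconc.2 h0 hρψmem (ne_of_lt hρψpos) ha' hb' hab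
    simp only [smul_eq_mul, hH0, mul_zero, zero_add] at this
    have heq : 1/ρstar * (ρstar * ψ x) = ψ x := by
      field_simp
    rw [heq] at this
    -- this : 1/ρstar * H (ρstar * ψ x) < H (ψ x)
    calc H (ρstar * ψ x) = ρstar * (1/ρstar * H (ρstar * ψ x)) := by
          field_simp
      _ < ρstar * H (ψ x) := by
          exact (mul_lt_mul_iff_right₀ hρpos).2 this
  have hmonoH : H (ψ1 x) ≤ H (ρstar * ψ x) :=
    hHmono hψ1x (le_of_lt (mul_pos hρpos hψx)) hρψ
  linarith
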